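/- Let S be a finite set, and for σ∈S let a_σ≥0 and u_σ∈ℝ; let |K|>0, δt>0, and let ρⁿ>0, ρⁿ⁺¹>0 and ρ_σ>0 (σ∈S) satisfy the discrete mass balance (|K|/δt)(ρⁿ⁺¹−ρⁿ) + Σ_{σ∈S} a_σ ρ_σ u_σ = 0. Let φ be twice continuously differentiable on (0,∞). Then there exists ρ^{1/2} ∈ [[ρⁿ,ρⁿ⁺¹]] such that (|K|/δt)(φ(ρⁿ⁺¹)−φ(ρⁿ)) + Σ_{σ∈S} a_σ φ(ρ_σ) u_σ + (ρⁿ⁺¹·φ'(ρⁿ⁺¹) − φ(ρⁿ⁺¹))·Σ_{σ∈S} a_σ u_σ + R = 0, where R = (1/2)(|K|/δt)·φ''(ρ^{1/2})·(ρⁿ⁺¹−ρⁿ)² + Σ_{σ∈S} a_σ·[φ(ρⁿ⁺¹) − φ(ρ_σ) + φ'(ρⁿ⁺¹)(ρ_σ−ρⁿ⁺¹)]·u_σ. -/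

import Mathlib

open Set

lemma taylor2_open {φ : ℝ → ℝ} {U : Set ℝ} (hU : IsOpen U) (hφ : ContDiffOn ℝ 2 φ U)
    {x₀ x : ℝ} (hsub : Icc x₀ x ⊆ U) (hx : x₀ < x) :
    ∃ c ∈ Set.Ioo x₀ x,
      φ x = φ x₀ + deriv φ x₀ * (x - x₀) + deriv (deriv φ) c * (x - x₀) ^ 2 / 2 := by
  have hud : UniqueDiffOn ℝ (Icc x₀ x) := uniqueDiffOn_Icc hx
  have hdφ : ContDiffOn ℝ 1 (deriv φ) U := by
    have := (contDiffOn_succ_iff_deriv_of_isOpen (n := 1) hU).1 (by exact_mod_cast hφ)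
    exact this.2.2
  have hdiffφ : ∀ t ∈ U, DifferentiableAt ℝ φ t := fun t ht =>
    ((hφ.contDiffAt (hU.mem_nhds ht)).differentiableAt (by norm_num))
  have hdiffdφ : ∀ t ∈ U, DifferentiableAt ℝ (deriv φ) t := fun t ht =>
    ((hdφ.contDiffAt (hU.mem_nhds ht)).differentiableAt one_ne_zero)
  have hIccnhds : ∀ t ∈ Ioo x₀ x, Icc x₀ x ∈ nhds t := fun t ht =>
    mem_nhds_iff.2 ⟨Ioo x₀ x, Ioo_subset_Icc_self, isOpen_Ioo, ht⟩
  have hid1 : ∀ t ∈ Ioo x₀ x, iteratedDerivWithin 1 φ (Icc x₀ x) t = deriv φ t := by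
    intro t ht
    rw [iteratedDerivWithin_one,
      derivWithin_of_mem_nhds (hIccnhds t ht)]
  have hf : ContDiffOn ℝ 1 φ (Icc x₀ x) := (hφ.of_le (by norm_num)).mono hsub
  have hf' : DifferentiableOn ℝ (iteratedDerivWithin 1 φ (Icc x₀ x)) (Ioo x₀ x) := by
    intro t ht
    have hd : DifferentiableAt ℝ (deriv φ) t := hdiffdφ t (hsub (Ioo_subset_Icc_self ht))
    refine (hd.differentiableWithinAt).congr_of_eventuallyEq ?_ (hid1 t ht)
    have : ∀ᶠ s in nhds t, iteratedDerivWithin 1 φ (Icc x₀ x) s = deriv φ s := by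
      filter_upwards [isOpen_Ioo.mem_nhds ht] with s hs using hid1 s hs
    exact this.filter_mono nhdsWithin_le_nhds
  obtain ⟨c, hc, hcy⟩ := taylor_mean_remainder_lagrange (n := 1) hx.ne
    (by rw [uIcc_of_le hx.le]; exact hf) (by rw [uIcc_of_le hx.le, uIoo_of_le hx.le]; exact hf')
  rw [uIoo_of_le hx.le] at hc
  rw [uIcc_of_le hx.le] at hcy
  refine ⟨c, hc, ?_⟩
  have h1 : taylorWithinEval φ 1 (Icc x₀ x) x₀ x = φ x₀ + deriv φ x₀ * (x - x₀) := by
    simp only [taylorWithinEval_succ, taylor_within_zero_eval]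
    rw [iteratedDerivWithin_one,
      (hdiffφ x₀ (hsub (left_mem_Icc.2 hx.le))).derivWithin (hud x₀ (left_mem_Icc.2 hx.le))]
    norm_num
    ring
  have h2 : iteratedDerivWithin 2 φ (Icc x₀ x) c = deriv (deriv φ) c := by
    rw [show (2:ℕ) = 1+1 from rfl, iteratedDerivWithin_succ]
    have heq : derivWithin (iteratedDerivWithin 1 φ (Icc x₀ x)) (Icc x₀ x) c
        = derivWithin (deriv φ) (Icc x₀ x) c := by
      apply Filter.EventuallyEq.derivWithin_eq _ (hid1 c hc)
      have : ∀ᶠ s in nhds c, iteratedDerivWithin 1 φ (Icc x₀ x) s = deriv φ s := by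
        filter_upwards [isOpen_Ioo.mem_nhds hc] with s hs using hid1 s hs
      exact this.filter_mono nhdsWithin_le_nhds
    rw [heq, derivWithin_of_mem_nhds (hIccnhds c hc)]
  rw [h1, h2] at hcy
  norm_num at hcy
  linarith

lemma taylor2_rev {φ : ℝ → ℝ} (hφ : ContDiffOn ℝ 2 φ (Set.Ioi 0))
    {x₀ x : ℝ} (hx : 0 < x) (hlt : x < x₀) :
    ∃ c ∈ Set.Ioo x x₀,
      φ x = φ x₀ + deriv φ x₀ * (x - x₀) + deriv (deriv φ) c * (x - x₀) ^ 2 / 2 := by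
  set p := x + x₀ with hp
  set ψ : ℝ → ℝ := fun t => φ (p - t) with hψ
  have hmap : ∀ t ∈ Iio p, p - t ∈ Ioi (0:ℝ) := fun t ht => by
    simp only [mem_Iio] at ht; simp [mem_Ioi]; linarith
  have hcomp : ContDiffOn ℝ 2 ψ (Iio p) := by
    apply hφ.comp (ContDiff.contDiffOn (by fun_prop)) hmap
  have hdiffφ : ∀ t ∈ Ioi (0:ℝ), DifferentiableAt ℝ φ t := fun t ht =>
    ((hφ.contDiffAt (isOpen_Ioi.mem_nhds ht)).differentiableAt (by norm_num))
  have hderivψ : ∀ t ∈ Iio p, deriv ψ t = -deriv φ (p - t) := by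
    intro t ht
    have h1 : HasDerivAt (fun s : ℝ => p - s) (-1) t := by
      simpa using (hasDerivAt_id t).const_sub p
    have h2 : HasDerivAt φ (deriv φ (p - t)) (p - t) := (hdiffφ _ (hmap t ht)).hasDerivAt
    have := (h2.comp t h1)
    have h3 : deriv ψ t = deriv φ (p - t) * (-1) := this.deriv
    rw [h3]; ring
  have hsub : Icc x x₀ ⊆ Iio p := fun t ht => by
    simp only [mem_Iio]; have := ht.2; simp only [hp]; linarith [ht.1, hx]
  obtain ⟨c', hc', hkey⟩ := taylor2_open isOpen_Iio hcomp hsub hlt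
  refine ⟨p - c', ?_, ?_⟩
  · obtain ⟨h1, h2⟩ := hc'; constructor <;> simp [hp] <;> linarith
  · have hdφ : ContDiffOn ℝ 1 (deriv φ) (Ioi 0) := by
      have := (contDiffOn_succ_iff_deriv_of_isOpen (n := 1) isOpen_Ioi).1 (by exact_mod_cast hφ)
      exact this.2.2
    have hdiffdφ : ∀ t ∈ Ioi (0:ℝ), DifferentiableAt ℝ (deriv φ) t := fun t ht =>
      ((hdφ.contDiffAt (isOpen_Ioi.mem_nhds ht)).differentiableAt one_ne_zero)
    have hc'p : c' ∈ Iio p := hsub (Ioo_subset_Icc_self hc')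
    -- second derivative of ψ at c'
    have hdd : deriv (deriv ψ) c' = deriv (deriv φ) (p - c') := by
      have heq : deriv ψ =ᶠ[nhds c'] fun t => -deriv φ (p - t) := by
        filter_upwards [isOpen_Iio.mem_nhds hc'p] with s hs using hderivψ s hs
      rw [heq.deriv_eq]
      have h1 : HasDerivAt (fun s : ℝ => p - s) (-1) c' := by
        simpa using (hasDerivAt_id c').const_sub p
      have h2 : HasDerivAt (deriv φ) (deriv (deriv φ) (p - c')) (p - c') :=
        (hdiffdφ _ (hmap c' hc'p)).hasDerivAt
      have := ((h2.comp c' h1).neg).deriv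
      have h3 : deriv (fun t => -deriv φ (p - t)) c' = -(deriv (deriv φ) (p - c') * (-1)) := this
      rw [h3]; ring
    have e1 : ψ x₀ = φ x := by simp [hψ, hp]
    have e2 : ψ x = φ x₀ := by simp [hψ, hp]
    have e3 : deriv ψ x = -deriv φ x₀ := by
      rw [hderivψ x (hsub (left_mem_Icc.2 hlt.le))]
      norm_num [hp]
    rw [e1, e2, e3, hdd] at hkey
    rw [hkey]; ring

lemma taylor2_uIcc {φ : ℝ → ℝ} (hφ : ContDiffOn ℝ 2 φ (Set.Ioi 0))
    {x y : ℝ} (hx : 0 < x) (hy : 0 < y) :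
    ∃ c ∈ Set.uIcc x y,
      φ x = φ y + deriv φ y * (x - y) + deriv (deriv φ) c * (x - y) ^ 2 / 2 := by
  rcases lt_trichotomy x y with h | h | h
  · obtain ⟨c, hc, hkey⟩ := taylor2_rev hφ hx h
    exact ⟨c, by rw [Set.uIcc_of_le h.le]; exact Ioo_subset_Icc_self hc, hkey⟩
  · exact ⟨y, Set.right_mem_uIcc, by simp [h]⟩
  · obtain ⟨c, hc, hkey⟩ := taylor2_open isOpen_Ioi hφ
      (fun t ht => lt_of_lt_of_le hy ht.1) h
    exact ⟨c, by rw [Set.uIcc_of_ge h.le]; exact Ioo_subset_Icc_self hc, hkey⟩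



/-- Discrete renormalized mass balance (Lemma 2.1): given the discrete mass balance
on a cell, any `C²` renormalizing function `φ` satisfies an exact identity with a
remainder made of a time part (evaluated at some intermediate density) and a face part. -/
theorem discrete_renormalized_mass_balance
    {ι : Type*} (S : Finset ι) (a u ρσ : ι → ℝ)
    (ha : ∀ σ ∈ S, 0 ≤ a σ) (hρσ : ∀ σ ∈ S, 0 < ρσ σ)
    (K δt ρn ρn1 : ℝ) (hK : 0 < K) (hδt : 0 < δt) (hρn : 0 < ρn) (hρn1 : 0 < ρn1)
    (hmass : K / δt * (ρn1 - ρn) + ∑ σ ∈ S, a σ * ρσ σ * u σ = 0)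
    (φ : ℝ → ℝ) (hφ : ContDiffOn ℝ 2 φ (Set.Ioi 0)) :
    ∃ ρh ∈ Set.uIcc ρn ρn1,
      K / δt * (φ ρn1 - φ ρn) + ∑ σ ∈ S, a σ * φ (ρσ σ) * u σ
        + (ρn1 * deriv φ ρn1 - φ ρn1) * ∑ σ ∈ S, a σ * u σ
        + (1 / 2 * (K / δt) * deriv (deriv φ) ρh * (ρn1 - ρn) ^ 2
            + ∑ σ ∈ S, a σ * (φ ρn1 - φ (ρσ σ) + deriv φ ρn1 * (ρσ σ - ρn1)) * u σ) = 0 := by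
  obtain ⟨c, hc, htaylor⟩ := taylor2_uIcc hφ hρn hρn1
  refine ⟨c, hc, ?_⟩
  have hsum : (ρn1 * deriv φ ρn1 - φ ρn1) * ∑ σ ∈ S, a σ * u σ
      + ∑ σ ∈ S, a σ * (φ ρn1 - φ (ρσ σ) + deriv φ ρn1 * (ρσ σ - ρn1)) * u σ
      + ∑ σ ∈ S, a σ * φ (ρσ σ) * u σ
      = deriv φ ρn1 * ∑ σ ∈ S, a σ * ρσ σ * u σ := by
    rw [Finset.mul_sum, Finset.mul_sum, ← Finset.sum_add_distrib, ← Finset.sum_add_distrib]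
    exact Finset.sum_congr rfl fun σ _ => by ring
  linear_combination hsum + deriv φ ρn1 * hmass - K / δt * htaylor
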